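/- Let n ≥ 1 be a natural number and m an integer. Let g : ℝ → ℝ be a continuous bijective degree-one lift such that g^[n](x) = x + m for all x ∈ ℝ, and let s : ℝ → ℝ be a continuous strictly decreasing function with s(x+1) = s(x) − 1 for all x, s(s(x)) = x for all x, and s(g(x)) = g⁻¹(s(x)) for all x, where g⁻¹ is the inverse function of g. Define h : ℝ → ℝ by h(x) = (1/(2n))·∑_{i=0}^{n−1} (g^[i](x) − g^[i](s(x))). Then h is continuous, strictly increasing, satisfies h(x+1) = h(x) + 1 for all x, satisfies h(g(x)) = h(x) + m/n for all x, and satisfies h(s(x)) = −h(x) for all x. -/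

import Mathlib

theorem stmt_3 (n : ℕ) (hn : 1 ≤ n) (m : ℤ) (g : ℝ → ℝ)
    (hgc : Continuous g) (hgbij : Function.Bijective g) (hgm : Monotone g)
    (hgdeg : ∀ x : ℝ, g (x + 1) = g x + 1)
    (hgper : ∀ x : ℝ, g^[n] x = x + m)
    (s : ℝ → ℝ) (hsc : Continuous s) (hsanti : StrictAnti s)
    (hsdeg : ∀ x : ℝ, s (x + 1) = s x - 1)
    (hsinv : ∀ x : ℝ, s (s x) = x)
    (hsg : ∀ x : ℝ, s (g x) = Function.invFun g (s x)) :
    ∀ h : ℝ → ℝ,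
      (h = fun x => (1 / (2 * n : ℝ)) * ∑ i ∈ Finset.range n, (g^[i] x - g^[i] (s x))) →
      Continuous h ∧ StrictMono h ∧ (∀ x : ℝ, h (x + 1) = h x + 1) ∧
        (∀ x : ℝ, h (g x) = h x + (m : ℝ) / n) ∧
        ∀ x : ℝ, h (s x) = -h x := by
  intro h hh
  have hn0 : (0 : ℝ) < (n : ℝ) := by exact_mod_cast hn
  have hc : (0 : ℝ) < 1 / (2 * n) := by positivity
  have hfg : ∀ y, g (Function.invFun g y) = y := fun y =>
    Function.rightInverse_invFun hgbij.surjective y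
  -- g^[i] commutes with +1
  have hA : ∀ i (x : ℝ), g^[i] (x + 1) = g^[i] x + 1 := by
    intro i
    induction i with
    | zero => simp
    | succ k ih => intro x; simp [Function.iterate_succ_apply, hgdeg, ih]
  have hA' : ∀ i (x : ℝ), g^[i] (x - 1) = g^[i] x - 1 := by
    intro i x
    have := hA i (x - 1)
    simp at this
    linarith
  -- shift sum lemma
  have hshift : ∀ x : ℝ, ∑ i ∈ Finset.range n, g^[i] (g x)
      = (∑ i ∈ Finset.range n, g^[i] x) + m := by
    intro x
    have h1 : ∑ i ∈ Finset.range (n + 1), g^[i] x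
        = (∑ i ∈ Finset.range n, g^[i] x) + g^[n] x := Finset.sum_range_succ _ n
    have h2 : ∑ i ∈ Finset.range (n + 1), g^[i] x
        = (∑ i ∈ Finset.range n, g^[i + 1] x) + g^[0] x := Finset.sum_range_succ' _ n
    have h3 : ∀ i, g^[i + 1] x = g^[i] (g x) := fun i => Function.iterate_succ_apply g i x
    simp only [h3, Function.iterate_zero_apply] at h2
    rw [hgper] at h1
    linarith [h1.symm.trans h2]
  -- sum over inverse
  have hinvsum : ∀ y : ℝ, ∑ i ∈ Finset.range n, g^[i] (Function.invFun g y)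
      = (∑ i ∈ Finset.range n, g^[i] y) - m := by
    intro y
    set z := Function.invFun g y with hz
    have h1 : ∑ i ∈ Finset.range (n + 1), g^[i] z
        = (∑ i ∈ Finset.range n, g^[i] z) + g^[n] z := Finset.sum_range_succ _ n
    have h2 : ∑ i ∈ Finset.range (n + 1), g^[i] z
        = (∑ i ∈ Finset.range n, g^[i + 1] z) + g^[0] z := Finset.sum_range_succ' _ n
    have h3 : ∀ i, g^[i + 1] z = g^[i] y := by
      intro i; rw [Function.iterate_succ_apply, hz, hfg]
    simp only [h3, Function.iterate_zero_apply] at h2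
    rw [hgper] at h1
    linarith [h1.symm.trans h2]
  have hgsm : StrictMono g := hgm.strictMono_of_injective hgbij.injective
  refine ⟨?_, ?_, ?_, ?_, ?_⟩
  · -- continuity
    rw [hh]
    exact continuous_const.mul (continuous_finset_sum _ fun i _ =>
      (hgc.iterate i).sub ((hgc.iterate i).comp hsc))
  · -- strict mono
    intro x y hxy
    rw [hh]
    dsimp only
    apply mul_lt_mul_of_pos_left _ hc
    apply Finset.sum_lt_sum
    · intro i _
      have h1 : g^[i] x ≤ g^[i] y := (hgm.iterate i) hxy.le
      have h2 : g^[i] (s y) ≤ g^[i] (s x) := (hgm.iterate i) (hsanti hxy).le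
      linarith
    · refine ⟨0, Finset.mem_range.mpr hn, ?_⟩
      simp only [Function.iterate_zero_apply]
      have := hsanti hxy
      linarith
  · -- h(x+1) = h x + 1
    intro x
    rw [hh]
    dsimp only
    have : ∀ i ∈ Finset.range n, g^[i] (x + 1) - g^[i] (s (x + 1))
        = (g^[i] x - g^[i] (s x)) + 2 := by
      intro i _
      rw [hA, hsdeg, hA']
      ring
    rw [Finset.sum_congr rfl this, Finset.sum_add_distrib, Finset.sum_const,
      Finset.card_range]
    have hne : (2 * (n : ℝ)) ≠ 0 := by positivity
    field_simp
    ring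
  · -- h(g x) = h x + m/n
    intro x
    rw [hh]
    dsimp only
    have e1 : ∑ i ∈ Finset.range n, (g^[i] (g x) - g^[i] (s (g x)))
        = (∑ i ∈ Finset.range n, g^[i] (g x))
          - ∑ i ∈ Finset.range n, g^[i] (Function.invFun g (s x)) := by
      rw [Finset.sum_sub_distrib]
      congr 1
      exact Finset.sum_congr rfl fun i _ => by rw [hsg]
    have e2 : ∑ i ∈ Finset.range n, (g^[i] x - g^[i] (s x))
        = (∑ i ∈ Finset.range n, g^[i] x) - ∑ i ∈ Finset.range n, g^[i] (s x) :=
      Finset.sum_sub_distrib _ _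
    rw [e1, hshift, hinvsum, e2]
    have hne : (n : ℝ) ≠ 0 := ne_of_gt hn0
    field_simp
    ring
  · -- h(s x) = -h x
    intro x
    rw [hh]
    dsimp only
    have : ∀ i ∈ Finset.range n, g^[i] (s x) - g^[i] (s (s x))
        = -(g^[i] x - g^[i] (s x)) := by
      intro i _
      rw [hsinv]
      ring
    rw [Finset.sum_congr rfl this, Finset.sum_neg_distrib]
    ring
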